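/- Let (ξ₁,…,ξ_k) be a uniformly random sample without replacement from {1,…,n}, set ζ_i = ξ_i/n, and let g : [0,1] → ℝ be bounded by M. Then for 1 ≤ j ≤ k, |E[(E_{j−1} g(ζ_j))⁴] − (E g(ζ₁))⁴| ≤ C/(n−j+1) for a constant C depending only on M. -/

import Mathlib

open Finset in
/-- Conditional expectation of `F` given the first `j` coordinates of a uniformly random
sample without replacement (an injective tuple) from `{1,…,n}`. -/
noncomputable def condExpSWOR (n k : ℕ) (j : ℕ) (F : (Fin k ↪ Fin n) → ℝ)
    (σ : Fin k ↪ Fin n) : ℝ :=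
  (∑ τ ∈ univ.filter (fun τ : Fin k ↪ Fin n => ∀ i : Fin k, (i : ℕ) < j → τ i = σ i), F τ) /
  ((univ.filter (fun τ : Fin k ↪ Fin n => ∀ i : Fin k, (i : ℕ) < j → τ i = σ i)).card : ℝ)

open Finset

lemma exists_perm_extend {n k : ℕ} (Q : Finset (Fin k)) (u v : Fin k → Fin n)
    (hu : Set.InjOn u Q) (hv : Set.InjOn v Q) :
    ∃ π : Equiv.Perm (Fin n), ∀ i ∈ Q, π (u i) = v i := by
  classical
  have cu : (Q.image u).card = Q.card := Finset.card_image_of_injOn hu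
  have cv : (Q.image v).card = Q.card := Finset.card_image_of_injOn hv
  have hbu : Function.Bijective (fun i : {x // x ∈ Q} =>
      (⟨u i, Finset.mem_image_of_mem u i.2⟩ : {x // x ∈ Q.image u})) := by
    rw [Fintype.bijective_iff_injective_and_card]
    constructor
    · intro a b h
      exact Subtype.ext (hu a.2 b.2 (congrArg Subtype.val h))
    · simp only [Fintype.card_coe, cu]
  have hbv : Function.Bijective (fun i : {x // x ∈ Q} =>
      (⟨v i, Finset.mem_image_of_mem v i.2⟩ : {x // x ∈ Q.image v})) := by
    rw [Fintype.bijective_iff_injective_and_card]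
    constructor
    · intro a b h
      exact Subtype.ext (hv a.2 b.2 (congrArg Subtype.val h))
    · simp only [Fintype.card_coe, cv]
  set Eu := Equiv.ofBijective _ hbu
  set Ev := Equiv.ofBijective _ hbv
  refine ⟨Equiv.extendSubtype (Eu.symm.trans Ev), ?_⟩
  intro i hi
  have hmem : u i ∈ Q.image u := Finset.mem_image_of_mem u hi
  rw [Equiv.extendSubtype_apply_of_mem _ _ hmem]
  have h1 : Eu ⟨i, hi⟩ = ⟨u i, hmem⟩ := rfl
  have h2 : Eu.symm ⟨u i, hmem⟩ = ⟨i, hi⟩ := by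
    rw [← h1, Equiv.symm_apply_apply]
  rw [Equiv.trans_apply, h2]
  rfl

lemma card_agree_eq {n k : ℕ} (Q : Finset (Fin k)) (u v : Fin k → Fin n)
    (hu : Set.InjOn u Q) (hv : Set.InjOn v Q) :
    (univ.filter fun σ : Fin k ↪ Fin n => ∀ i ∈ Q, σ i = u i).card =
    (univ.filter fun σ : Fin k ↪ Fin n => ∀ i ∈ Q, σ i = v i).card := by
  classical
  obtain ⟨π, hπ⟩ := exists_perm_extend Q u v hu hv
  refine Finset.card_bij' (fun σ _ => σ.trans π.toEmbedding)
    (fun σ _ => σ.trans π.symm.toEmbedding) ?_ ?_ ?_ ?_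
  · intro σ hσ
    simp only [Finset.mem_filter, Finset.mem_univ, true_and] at hσ ⊢
    intro i hi
    simp [Function.Embedding.trans_apply, hσ i hi, hπ i hi]
  · intro τ hτ
    simp only [Finset.mem_filter, Finset.mem_univ, true_and] at hτ ⊢
    intro i hi
    simp only [Function.Embedding.trans_apply, hτ i hi, ← hπ i hi]
    simp
  · intro σ _
    ext x
    simp
  · intro σ _
    ext x
    simp

lemma fiber_count_single {n k : ℕ} (i : Fin k) (t : Fin n) :
    n * (univ.filter fun σ : Fin k ↪ Fin n => σ i = t).card
      = Fintype.card (Fin k ↪ Fin n) := by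
  classical
  have h0 : Fintype.card (Fin k ↪ Fin n)
      = ∑ t' : Fin n, (univ.filter fun σ : Fin k ↪ Fin n => σ i = t').card := by
    rw [← Finset.card_univ]
    exact Finset.card_eq_sum_card_fiberwise (fun σ _ => Finset.mem_univ (σ i))
  have h1 : ∀ t' : Fin n, (univ.filter fun σ : Fin k ↪ Fin n => σ i = t').card
      = (univ.filter fun σ : Fin k ↪ Fin n => σ i = t).card := by
    intro t'
    have := card_agree_eq {i} (fun _ => t') (fun _ => t)
      (fun a ha b hb _ => by simp only [Finset.coe_singleton, Set.mem_singleton_iff] at ha hb; rw [ha, hb])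
      (fun a ha b hb _ => by simp only [Finset.coe_singleton, Set.mem_singleton_iff] at ha hb; rw [ha, hb])
    simpa using this
  rw [h0, Finset.sum_congr rfl (fun t' _ => h1 t'), Finset.sum_const, Finset.card_univ,
    Fintype.card_fin, smul_eq_mul]

lemma sum_single {n k : ℕ} (i : Fin k) (f : Fin n → ℝ) :
    (n : ℝ) * ∑ σ : Fin k ↪ Fin n, f (σ i)
      = (Fintype.card (Fin k ↪ Fin n) : ℝ) * ∑ t, f t := by
  classical
  have h0 : ∑ σ : Fin k ↪ Fin n, f (σ i)
      = ∑ t : Fin n, ∑ σ ∈ univ.filter (fun σ : Fin k ↪ Fin n => σ i = t), f (σ i) :=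
    (Finset.sum_fiberwise_of_maps_to (fun σ _ => Finset.mem_univ (σ i)) _).symm
  have h1 : ∀ t : Fin n, ∑ σ ∈ univ.filter (fun σ : Fin k ↪ Fin n => σ i = t), f (σ i)
      = ((univ.filter fun σ : Fin k ↪ Fin n => σ i = t).card : ℝ) * f t := by
    intro t
    rw [Finset.sum_congr rfl (fun σ hσ => by
      rw [(Finset.mem_filter.mp hσ).2]), Finset.sum_const, nsmul_eq_mul]
  rw [h0, Finset.sum_congr rfl (fun t _ => h1 t), Finset.mul_sum, Finset.mul_sum]
  refine Finset.sum_congr rfl fun t _ => ?_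
  rw [← mul_assoc, ← Nat.cast_mul, fiber_count_single i t]

lemma pair_filter_eq {n k : ℕ} (i i' : Fin k) (hii : i ≠ i') (p : Fin n × Fin n) :
    (univ.filter fun σ : Fin k ↪ Fin n => (σ i, σ i') = p)
      = (univ.filter fun σ : Fin k ↪ Fin n =>
          ∀ x ∈ ({i, i'} : Finset (Fin k)), σ x = (fun x => if x = i then p.1 else p.2) x) := by
  ext σ
  simp only [Finset.mem_filter, Finset.mem_univ, true_and, Finset.mem_insert,
    Finset.mem_singleton, Prod.ext_iff]
  constructor
  · rintro ⟨h1, h2⟩ x hx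
    rcases hx with rfl | rfl
    · simp [h1]
    · simp [if_neg (Ne.symm hii), h2]
  · intro h
    refine ⟨by simpa using h i (Or.inl rfl), by simpa [if_neg (Ne.symm hii)] using h i' (Or.inr rfl)⟩

lemma injOn_pair {n k : ℕ} {i i' : Fin k} (hii : i ≠ i') {p : Fin n × Fin n} (hp : p.1 ≠ p.2) :
    Set.InjOn (fun x => if x = i then p.1 else p.2) ({i, i'} : Finset (Fin k)) := by
  intro a ha b hb hab
  simp only [Finset.coe_insert, Set.mem_insert_iff, Finset.coe_singleton,
    Set.mem_singleton_iff] at ha hb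
  rcases ha with rfl | rfl <;> rcases hb with rfl | rfl <;>
    simp only [if_pos rfl, if_neg (Ne.symm hii)] at hab <;> first | rfl | (exact absurd hab hp) | (exact absurd hab.symm hp)

lemma fiber_count_pair {n k : ℕ} (i i' : Fin k) (hii : i ≠ i') (p : Fin n × Fin n)
    (hp : p.1 ≠ p.2) :
    (n * n - n) * (univ.filter fun σ : Fin k ↪ Fin n => (σ i, σ i') = p).card
      = Fintype.card (Fin k ↪ Fin n) := by
  classical
  have hmaps : ∀ σ : Fin k ↪ Fin n, σ ∈ (univ : Finset (Fin k ↪ Fin n)) →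
      (σ i, σ i') ∈ (univ : Finset (Fin n)).offDiag := by
    intro σ _
    exact Finset.mem_offDiag.mpr ⟨Finset.mem_univ _, Finset.mem_univ _,
      fun h => hii (σ.injective h)⟩
  have h0 : Fintype.card (Fin k ↪ Fin n)
      = ∑ q ∈ (univ : Finset (Fin n)).offDiag,
          (univ.filter fun σ : Fin k ↪ Fin n => (σ i, σ i') = q).card := by
    rw [← Finset.card_univ]
    exact Finset.card_eq_sum_card_fiberwise hmaps
  have h1 : ∀ q ∈ (univ : Finset (Fin n)).offDiag,
      (univ.filter fun σ : Fin k ↪ Fin n => (σ i, σ i') = q).card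
        = (univ.filter fun σ : Fin k ↪ Fin n => (σ i, σ i') = p).card := by
    intro q hq
    have hq' : q.1 ≠ q.2 := (Finset.mem_offDiag.mp hq).2.2
    rw [pair_filter_eq i i' hii q, pair_filter_eq i i' hii p]
    exact card_agree_eq _ _ _ (injOn_pair hii hq') (injOn_pair hii hp)
  rw [h0, Finset.sum_congr rfl h1, Finset.sum_const, smul_eq_mul, Finset.offDiag_card,
    Finset.card_univ, Fintype.card_fin]

lemma sum_pair {n k : ℕ} (i i' : Fin k) (hii : i ≠ i') (f : Fin n → ℝ) :
    ((n * n - n : ℕ) : ℝ) * ∑ σ : Fin k ↪ Fin n, f (σ i) * f (σ i')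
      = (Fintype.card (Fin k ↪ Fin n) : ℝ)
        * ∑ q ∈ (univ : Finset (Fin n)).offDiag, f q.1 * f q.2 := by
  classical
  have hmaps : ∀ σ : Fin k ↪ Fin n, σ ∈ (univ : Finset (Fin k ↪ Fin n)) →
      (σ i, σ i') ∈ (univ : Finset (Fin n)).offDiag := by
    intro σ _
    exact Finset.mem_offDiag.mpr ⟨Finset.mem_univ _, Finset.mem_univ _,
      fun h => hii (σ.injective h)⟩
  have h0 : ∑ σ : Fin k ↪ Fin n, f (σ i) * f (σ i')
      = ∑ q ∈ (univ : Finset (Fin n)).offDiag,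
          ∑ σ ∈ univ.filter (fun σ : Fin k ↪ Fin n => (σ i, σ i') = q), f (σ i) * f (σ i') :=
    (Finset.sum_fiberwise_of_maps_to hmaps _).symm
  rw [h0, Finset.mul_sum, Finset.mul_sum]
  refine Finset.sum_congr rfl fun q hq => ?_
  have hq' : q.1 ≠ q.2 := (Finset.mem_offDiag.mp hq).2.2
  have h1 : ∑ σ ∈ univ.filter (fun σ : Fin k ↪ Fin n => (σ i, σ i') = q), f (σ i) * f (σ i')
      = ((univ.filter fun σ : Fin k ↪ Fin n => (σ i, σ i') = q).card : ℝ) * (f q.1 * f q.2) := by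
    rw [Finset.sum_congr rfl (fun σ hσ => by
      have := (Finset.mem_filter.mp hσ).2
      rw [show σ i = q.1 from congrArg Prod.fst this, show σ i' = q.2 from congrArg Prod.snd this]),
      Finset.sum_const, nsmul_eq_mul]
  rw [h1, ← mul_assoc, ← Nat.cast_mul, fiber_count_pair i i' hii q hq']

lemma offDiag_sum_eq {n : ℕ} (a : Fin n → ℝ) (h : ∑ t, a t = 0) :
    ∑ q ∈ (univ : Finset (Fin n)).offDiag, a q.1 * a q.2 = - ∑ t, (a t) ^ 2 := by
  classical
  have hall : ∑ q ∈ ((univ : Finset (Fin n)) ×ˢ univ), a q.1 * a q.2 = 0 := by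
    rw [Finset.sum_product]
    simp only [← Finset.mul_sum, ← Finset.sum_mul, h, mul_zero, zero_mul]
    simp
  rw [← Finset.diag_union_offDiag, Finset.sum_union (Finset.disjoint_diag_offDiag _),
    Finset.sum_diag] at hall
  have h2 : ∑ t : Fin n, a t * a t = ∑ t : Fin n, (a t) ^ 2 :=
    Finset.sum_congr rfl fun t _ => (sq (a t)).symm
  linarith [hall, h2]

lemma card_P {k : ℕ} (j' : ℕ) (hj' : j' ≤ k) :
    ((univ : Finset (Fin k)).filter fun i : Fin k => (i : ℕ) < j').card = j' := by
  classical
  have key : ((univ : Finset (Fin k)).filter fun i : Fin k => (i : ℕ) < j').card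
      = (Finset.range j').card := by
    refine Finset.card_bij' (fun i _ => (i : ℕ))
      (fun x hx => ⟨x, by have := Finset.mem_range.mp hx; omega⟩) ?_ ?_ ?_ ?_
    · intro i hi
      simp only [Finset.mem_filter] at hi
      exact Finset.mem_range.mpr hi.2
    · intro x hx
      simp only [Finset.mem_filter, Finset.mem_univ, true_and]
      exact Finset.mem_range.mp hx
    · intro i hi; rfl
    · intro x hx; rfl
  rw [key, Finset.card_range]

lemma condExp_eval {n k : ℕ} (j' : ℕ) (hj' : j' < k) (f : Fin n → ℝ) (σ : Fin k ↪ Fin n) :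
    condExpSWOR n k j' (fun τ => f (τ ⟨j', hj'⟩)) σ
      = (∑ t ∈ univ \ ((univ.filter fun i : Fin k => (i : ℕ) < j').image σ), f t)
        / ((n - j' : ℕ) : ℝ) := by
  classical
  set jj : Fin k := ⟨j', hj'⟩ with hjj
  set P : Finset (Fin k) := univ.filter fun i : Fin k => (i : ℕ) < j' with hP
  set S : Finset (Fin n) := P.image σ with hS
  set B : Finset (Fin k ↪ Fin n) :=
    univ.filter (fun τ : Fin k ↪ Fin n => ∀ i : Fin k, (i : ℕ) < j' → τ i = σ i) with hB
  have hjjP : jj ∉ P := by simp [hP, hjj]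
  have hmemB : ∀ τ ∈ B, τ jj ∈ univ \ S := by
    intro τ hτ
    have hτ' := (Finset.mem_filter.mp hτ).2
    refine Finset.mem_sdiff.mpr ⟨Finset.mem_univ _, ?_⟩
    intro hc
    obtain ⟨i, hiP, hieq⟩ := Finset.mem_image.mp hc
    have hi' : (i : ℕ) < j' := (Finset.mem_filter.mp hiP).2
    have h1 : τ jj = τ i := by rw [← hτ' i hi'] at hieq; exact hieq.symm
    have h2 := τ.injective h1
    have h3 : j' = (i : ℕ) := congrArg Fin.val h2
    omega
  -- translate fibers
  have htrans : ∀ t : Fin n, B.filter (fun τ => τ jj = t)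
      = univ.filter (fun τ : Fin k ↪ Fin n =>
          ∀ i ∈ insert jj P, τ i = (fun x => if x = jj then t else σ x) i) := by
    intro t
    ext τ
    simp only [hB, Finset.mem_filter, Finset.mem_univ, true_and, Finset.mem_insert]
    constructor
    · rintro ⟨h1, h2⟩ i hi
      rcases hi with rfl | hiP
      · simp [h2]
      · have hi' : (i : ℕ) < j' := (Finset.mem_filter.mp hiP).2
        have hine : i ≠ jj := by intro h; rw [h] at hi'; simp [hjj] at hi'
        simp [if_neg hine, h1 i hi']
    · intro h
      constructor
      · intro i hi'
        have hiP : i ∈ P := by simp [hP, hi']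
        have hine : i ≠ jj := by intro hh; rw [hh] at hi'; simp [hjj] at hi'
        have := h i (Or.inr hiP)
        simpa [if_neg hine] using this
      · simpa using h jj (Or.inl rfl)
  have hinj : ∀ t ∈ univ \ S, Set.InjOn (fun x => if x = jj then t else σ x)
      (insert jj P : Finset (Fin k)) := by
    intro t ht
    have htS : t ∉ S := (Finset.mem_sdiff.mp ht).2
    intro a ha b hb hab
    simp only [Finset.coe_insert, Set.mem_insert_iff, Finset.mem_coe] at ha hb
    have hPne : ∀ x, x ∈ P → x ≠ jj := by
      intro x hx h
      have := (Finset.mem_filter.mp hx).2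
      rw [h] at this; simp [hjj] at this
    rcases ha with rfl | haP <;> rcases hb with rfl | hbP
    · rfl
    · exfalso
      simp only [if_pos rfl, if_neg (hPne b hbP)] at hab
      exact htS (hS ▸ Finset.mem_image.mpr ⟨b, hbP, hab.symm⟩)
    · exfalso
      simp only [if_pos rfl, if_neg (hPne a haP)] at hab
      exact htS (hS ▸ Finset.mem_image.mpr ⟨a, haP, hab⟩)
    · simp only [if_neg (hPne a haP), if_neg (hPne b hbP)] at hab
      exact σ.injective hab
  have hσB : σ ∈ B := by simp [hB]
  have hσjj : σ jj ∈ univ \ S := hmemB σ hσB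
  set c : ℕ := (B.filter (fun τ => τ jj = σ jj)).card with hc
  have hfib : ∀ t ∈ univ \ S, (B.filter (fun τ => τ jj = t)).card = c := by
    intro t ht
    rw [htrans t, hc, htrans (σ jj)]
    exact card_agree_eq _ _ _ (hinj t ht) (hinj (σ jj) hσjj)
  have hcpos : 0 < c := by
    rw [hc]
    exact Finset.card_pos.mpr ⟨σ, Finset.mem_filter.mpr ⟨hσB, rfl⟩⟩
  have hScard : S.card = j' := by
    rw [hS, Finset.card_image_of_injective _ σ.injective, hP, card_P j' hj'.le]
  have hmcard : (univ \ S).card = n - j' := by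
    rw [Finset.card_sdiff_of_subset (Finset.subset_univ _), Finset.card_univ, Fintype.card_fin, hScard]
  have hBcard : B.card = (n - j') * c := by
    rw [Finset.card_eq_sum_card_fiberwise hmemB,
      Finset.sum_congr rfl hfib, Finset.sum_const, smul_eq_mul, hmcard]
  have hsumB : ∑ τ ∈ B, f (τ jj) = (c : ℝ) * ∑ t ∈ univ \ S, f t := by
    rw [← Finset.sum_fiberwise_of_maps_to hmemB (fun τ => f (τ jj)), Finset.mul_sum]
    refine Finset.sum_congr rfl fun t ht => ?_
    rw [Finset.sum_congr rfl (fun τ hτ => by rw [(Finset.mem_filter.mp hτ).2]),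
      Finset.sum_const, nsmul_eq_mul, hfib t ht]
  show (∑ τ ∈ B, f (τ jj)) / (B.card : ℝ) = _
  rw [hsumB, hBcard]
  push_cast
  rw [mul_comm ((n - j' : ℕ) : ℝ) (c : ℝ),
    mul_div_mul_left _ _ (by exact_mod_cast hcpos.ne')]

set_option maxHeartbeats 1000000 in
lemma key {n k j' : ℕ} (hj'k : j' < k) (hk : k ≤ n) (M : ℝ) (gg : Fin n → ℝ)
    (hgg : ∀ t, |gg t| ≤ M) :
    |(∑ σ : Fin k ↪ Fin n,
        ((∑ t ∈ univ \ ((univ.filter fun i : Fin k => (i : ℕ) < j').image σ), gg t)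
          / ((n - j' : ℕ) : ℝ)) ^ 4) / (Fintype.card (Fin k ↪ Fin n) : ℝ)
      - ((∑ t, gg t) / n) ^ 4| ≤ 72 * M ^ 4 / ((n - j' : ℕ) : ℝ) := by
  classical
  have hn : 0 < n := lt_of_le_of_lt (Nat.zero_le j') (lt_of_lt_of_le hj'k hk)
  have hnR : (n : ℝ) ≠ 0 := by exact_mod_cast hn.ne'
  have hM : 0 ≤ M := le_trans (abs_nonneg _) (hgg ⟨0, hn⟩)
  set N : ℕ := Fintype.card (Fin k ↪ Fin n) with hN
  have hNpos : 0 < N := Fintype.card_pos_iff.mpr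
    ⟨⟨Fin.castLE hk, Fin.castLE_injective hk⟩⟩
  have hNR : (0 : ℝ) < N := by exact_mod_cast hNpos
  set m : ℕ := n - j' with hm
  have hmpos : 0 < m := by omega
  have hmR : (0 : ℝ) < m := by exact_mod_cast hmpos
  set μ : ℝ := (∑ t, gg t) / n with hμ
  set a : Fin n → ℝ := fun t => gg t - μ with ha
  set T : ℝ := ∑ t, (a t) ^ 2 with hT
  have hμb : |μ| ≤ M := by
    rw [hμ, abs_div, abs_of_nonneg (by positivity : (0:ℝ) ≤ (n:ℕ))]
    rw [div_le_iff₀ (by exact_mod_cast hn)]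
    calc |∑ t, gg t| ≤ ∑ t, |gg t| := Finset.abs_sum_le_sum_abs _ _
      _ ≤ ∑ _t : Fin n, M := Finset.sum_le_sum fun t _ => hgg t
      _ = M * n := by
          rw [Finset.sum_const, Finset.card_univ, Fintype.card_fin, nsmul_eq_mul, mul_comm]
  have hab : ∀ t, |a t| ≤ 2 * M := by
    intro t
    calc |a t| ≤ |gg t| + |μ| := abs_sub _ _
      _ ≤ M + M := add_le_add (hgg t) hμb
      _ = 2 * M := by ring
  have hTnn : 0 ≤ T := Finset.sum_nonneg fun t _ => sq_nonneg _
  have hTle : T ≤ 4 * M ^ 2 * n := by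
    rw [hT]
    calc ∑ t, (a t) ^ 2 ≤ ∑ _t : Fin n, 4 * M ^ 2 := by
          refine Finset.sum_le_sum fun t _ => ?_
          have := hab t
          calc (a t) ^ 2 = |a t| ^ 2 := (sq_abs _).symm
            _ ≤ (2 * M) ^ 2 := by nlinarith [abs_nonneg (a t)]
            _ = 4 * M ^ 2 := by ring
      _ = 4 * M ^ 2 * n := by
          rw [Finset.sum_const, Finset.card_univ, Fintype.card_fin, nsmul_eq_mul, mul_comm]
  have hsa : ∑ t, a t = 0 := by
    rw [ha]
    simp only [Finset.sum_sub_distrib, Finset.sum_const, Finset.card_univ, Fintype.card_fin,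
      nsmul_eq_mul, hμ]
    field_simp
    ring
  set P : Finset (Fin k) := univ.filter fun i : Fin k => (i : ℕ) < j' with hP
  have hPcard : P.card = j' := card_P j' hj'k.le
  set A : (Fin k ↪ Fin n) → ℝ := fun σ => ∑ i ∈ P, a (σ i) with hA
  set D : (Fin k ↪ Fin n) → ℝ :=
    fun σ => (∑ t ∈ univ \ (P.image σ), gg t) / (m : ℝ) with hD
  -- D = μ - A/m
  have hDX : ∀ σ : Fin k ↪ Fin n, D σ = μ - A σ / m := by
    intro σ
    have hsd : ∑ t ∈ univ \ (P.image σ), gg t = (∑ t, gg t) - ∑ i ∈ P, gg (σ i) := by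
      rw [Finset.sum_sdiff_eq_sub (Finset.subset_univ _),
        Finset.sum_image (fun x _ y _ h => σ.injective h)]
    have hAσ : A σ = (∑ i ∈ P, gg (σ i)) - j' * μ := by
      rw [hA]
      simp only [ha, Finset.sum_sub_distrib, Finset.sum_const, hPcard, nsmul_eq_mul]
    have hsum_gg : (∑ t, gg t) = n * μ := by
      rw [hμ]; field_simp
    simp only [hD]
    rw [hsd, hAσ, hsum_gg]
    have hnm : (n : ℝ) = (m : ℝ) + j' := by
      rw [hm]; push_cast [Nat.cast_sub (le_of_lt (lt_of_lt_of_le hj'k hk))]; ring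
    field_simp
    rw [hnm]; ring
  have hDb : ∀ σ : Fin k ↪ Fin n, |D σ| ≤ M := by
    intro σ
    simp only [hD]
    rw [abs_div, abs_of_nonneg (le_of_lt hmR), div_le_iff₀ hmR]
    have hcard : (univ \ (P.image σ)).card = m := by
      rw [Finset.card_sdiff_of_subset (Finset.subset_univ _), Finset.card_univ, Fintype.card_fin,
        Finset.card_image_of_injective _ σ.injective, hPcard]
    calc |∑ t ∈ univ \ (P.image σ), gg t| ≤ ∑ t ∈ univ \ (P.image σ), |gg t| :=
          Finset.abs_sum_le_sum_abs _ _
      _ ≤ ∑ _t ∈ univ \ (P.image σ), M := Finset.sum_le_sum fun t _ => hgg t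
      _ = M * m := by rw [Finset.sum_const, hcard, nsmul_eq_mul, mul_comm]
  -- first moment
  have hE1 : ∑ σ : Fin k ↪ Fin n, A σ = 0 := by
    rw [hA, Finset.sum_comm]
    refine Finset.sum_eq_zero fun i _ => ?_
    have h := sum_single i a
    rw [hsa, mul_zero] at h
    exact (mul_eq_zero.mp h).resolve_left hnR
  -- second moment pieces
  have hdiag : ∀ i : Fin k, ∑ σ : Fin k ↪ Fin n, (a (σ i)) ^ 2 = (N : ℝ) * T / n := by
    intro i
    have h := sum_single i (fun t => (a t) ^ 2)
    rw [← hN, ← hT] at h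
    rw [eq_div_iff hnR, mul_comm]
    exact h
  have hoff : ∀ i i' : Fin k, i ∈ P → i' ∈ P → i ≠ i' →
      ∑ σ : Fin k ↪ Fin n, a (σ i) * a (σ i')
        = -((N : ℝ) * T) / ((n * n - n : ℕ) : ℝ) := by
    intro i i' hiP hi'P hii
    have hn2 : 2 ≤ n := by
      have h1 : (i : ℕ) < j' := (Finset.mem_filter.mp hiP).2
      omega
    have h := sum_pair i i' hii a
    rw [offDiag_sum_eq a hsa, ← hN, ← hT] at h
    have hnn : 0 < n * n - n := by
      have h2 : n * 2 ≤ n * n := Nat.mul_le_mul_left n hn2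
      omega
    have hden : ((n * n - n : ℕ) : ℝ) ≠ 0 := by
      exact_mod_cast hnn.ne'
    rw [eq_div_iff hden, mul_comm]
    rw [h]; ring
  have hE2 : ∑ σ : Fin k ↪ Fin n, (A σ) ^ 2
      = (j' : ℝ) * ((N : ℝ) * T / n)
        + ((j' * j' - j' : ℕ) : ℝ) * (-((N : ℝ) * T) / ((n * n - n : ℕ) : ℝ)) := by
    have expand : ∀ σ : Fin k ↪ Fin n, (A σ) ^ 2 = ∑ q ∈ P ×ˢ P, a (σ q.1) * a (σ q.2) := by
      intro σ
      rw [hA, sq, Finset.sum_mul_sum, Finset.sum_product]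
    rw [Finset.sum_congr rfl fun σ _ => expand σ, Finset.sum_comm]
    rw [← Finset.diag_union_offDiag P, Finset.sum_union (Finset.disjoint_diag_offDiag _)]
    have h1 : ∑ q ∈ P.diag, ∑ σ : Fin k ↪ Fin n, a (σ q.1) * a (σ q.2)
        = (j' : ℝ) * ((N : ℝ) * T / n) := by
      rw [Finset.sum_diag]
      have heach : ∀ i ∈ P, ∑ σ : Fin k ↪ Fin n, a (σ i) * a (σ i) = (N : ℝ) * T / n := by
        intro i _
        rw [← hdiag i]
        exact Finset.sum_congr rfl fun σ _ => (sq (a (σ i))).symm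
      rw [Finset.sum_congr rfl heach, Finset.sum_const, hPcard, nsmul_eq_mul]
    have h2 : ∑ q ∈ P.offDiag, ∑ σ : Fin k ↪ Fin n, a (σ q.1) * a (σ q.2)
        = ((j' * j' - j' : ℕ) : ℝ) * (-((N : ℝ) * T) / ((n * n - n : ℕ) : ℝ)) := by
      have heach : ∀ q ∈ P.offDiag, ∑ σ : Fin k ↪ Fin n, a (σ q.1) * a (σ q.2)
          = -((N : ℝ) * T) / ((n * n - n : ℕ) : ℝ) := by
        intro q hq
        obtain ⟨hq1, hq2, hq3⟩ := Finset.mem_offDiag.mp hq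
        exact hoff q.1 q.2 hq1 hq2 hq3
      rw [Finset.sum_congr rfl heach, Finset.sum_const, Finset.offDiag_card, hPcard,
        nsmul_eq_mul]
    rw [h1, h2]
  -- second moment bound
  have hE2' : ∑ σ : Fin k ↪ Fin n, (A σ) ^ 2 ≤ 4 * M ^ 2 * N * m := by
    rcases Nat.lt_or_ge j' 2 with hj2 | hj2
    · interval_cases j'
      · rw [hE2]; norm_num; positivity
      · rw [hE2]
        norm_num
        have step1 : (N : ℝ) * T / n ≤ 4 * M ^ 2 * N := by
          rw [div_le_iff₀ (by exact_mod_cast hn : (0:ℝ) < n)]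
          nlinarith [hNR.le]
        have h1m : (1:ℝ) ≤ (m:ℝ) := by exact_mod_cast hmpos
        have step2 : (0:ℝ) ≤ 4 * M ^ 2 * (N : ℝ) * ((m:ℝ) - 1) :=
          mul_nonneg (by positivity) (by linarith)
        linarith [step1, step2]
    · have hn2 : 2 ≤ n := le_trans hj2 (le_trans hj'k.le hk)
      have hj'n : j' < n := lt_of_lt_of_le hj'k hk
      have hle1 : j' ≤ j' * j' := by nlinarith
      have hle2 : n ≤ n * n := by nlinarith
      have c1 : ((j' * j' - j' : ℕ) : ℝ) = (j' : ℝ) * j' - j' := by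
        push_cast [Nat.cast_sub hle1]
        ring
      have c2 : ((n * n - n : ℕ) : ℝ) = (n : ℝ) * n - n := by
        push_cast [Nat.cast_sub hle2]
        ring
      have c3 : (m : ℝ) = (n : ℝ) - j' := by
        rw [hm]; push_cast [Nat.cast_sub hj'n.le]; ring
      set u : ℝ := (n : ℝ) with hu
      set v : ℝ := (j' : ℝ) with hv
      have huv : v + 1 ≤ u := by rw [hu, hv]; exact_mod_cast hj'n
      have hv2 : (2 : ℝ) ≤ v := by rw [hv]; exact_mod_cast hj2
      have hu0 : (0 : ℝ) < u := by rw [hu]; exact_mod_cast hn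
      have hu1 : (0 : ℝ) < u - 1 := by linarith
      have hpos2 : (0 : ℝ) < u * u - u := by nlinarith
      have hpos3 : (0 : ℝ) < u * (u - 1) := mul_pos hu0 hu1
      rw [hE2, c1, c2, c3]
      have hfrac : v * ((N : ℝ) * T / u) + (v * v - v) * (-((N : ℝ) * T) / (u * u - u))
          = (N : ℝ) * T * v * (u - v) / (u * (u - 1)) := by
        field_simp
        ring
      rw [hfrac, div_le_iff₀ hpos3]
      have e1 : (0:ℝ) ≤ (N : ℝ) * (4 * M ^ 2 * u - T) * (v * (u - v)) := by
        refine mul_nonneg (mul_nonneg hNR.le ?_) (mul_nonneg (by linarith) (by linarith))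
        have : T ≤ 4 * M ^ 2 * u := by rw [hu]; exact hTle
        linarith
      have e2 : (0:ℝ) ≤ 4 * M ^ 2 * (N : ℝ) * u * (u - v) * ((u - 1) - v) := by
        have h4 : (0:ℝ) ≤ 4 * M ^ 2 * (N : ℝ) * u := by positivity
        refine mul_nonneg (mul_nonneg h4 (by linarith)) (by linarith)
      nlinarith [e1, e2]
  -- variance of D
  have hEX : ∑ σ : Fin k ↪ Fin n, (D σ - μ) = 0 := by
    have hpt : ∀ σ : Fin k ↪ Fin n, D σ - μ = -(A σ / m) := by
      intro σ; rw [hDX σ]; ring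
    rw [Finset.sum_congr rfl fun σ _ => hpt σ]
    simp only [div_eq_mul_inv, neg_mul_eq_neg_mul]
    rw [← Finset.sum_mul]
    simp only [Finset.sum_neg_distrib, hE1, neg_zero, zero_mul]
  have hX2 : ∑ σ : Fin k ↪ Fin n, (D σ - μ) ^ 2 ≤ 4 * M ^ 2 * N / m := by
    have hpt : ∀ σ : Fin k ↪ Fin n, (D σ - μ) ^ 2 = (A σ) ^ 2 / (m : ℝ) ^ 2 := by
      intro σ
      rw [hDX σ]
      field_simp
      ring
    rw [Finset.sum_congr rfl fun σ _ => hpt σ, ← Finset.sum_div]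
    rw [div_le_div_iff₀ (by positivity) hmR]
    calc (∑ σ : Fin k ↪ Fin n, (A σ) ^ 2) * m ≤ (4 * M ^ 2 * N * m) * m := by
          exact mul_le_mul_of_nonneg_right hE2' hmR.le
      _ = 4 * M ^ 2 * N * (m : ℝ) ^ 2 := by ring
  -- pointwise fourth power bound
  have hptb : ∀ σ : Fin k ↪ Fin n,
      |D σ ^ 4 - μ ^ 4 - 4 * μ ^ 3 * (D σ - μ)| ≤ 18 * M ^ 2 * (D σ - μ) ^ 2 := by
    intro σ
    have hXb : |D σ - μ| ≤ 2 * M := by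
      calc |D σ - μ| ≤ |D σ| + |μ| := abs_sub _ _
        _ ≤ M + M := add_le_add (hDb σ) hμb
        _ = 2 * M := by ring
    obtain ⟨hX1, hX2'⟩ := abs_le.mp hXb
    obtain ⟨hμ1, hμ2⟩ := abs_le.mp hμb
    have hid : D σ ^ 4 - μ ^ 4 - 4 * μ ^ 3 * (D σ - μ)
        = (6 * μ ^ 2 + 4 * μ * (D σ - μ) + (D σ - μ) ^ 2) * (D σ - μ) ^ 2 := by
      ring
    rw [hid, abs_mul, abs_of_nonneg (sq_nonneg (D σ - μ))]
    refine mul_le_mul_of_nonneg_right ?_ (sq_nonneg _)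
    rw [abs_le]
    constructor
    · nlinarith [sq_nonneg (μ + (D σ - μ)), sq_nonneg (μ - (D σ - μ)), sq_nonneg μ,
        sq_nonneg (D σ - μ)]
    · nlinarith [sq_nonneg (μ + (D σ - μ)), sq_nonneg (μ - (D σ - μ)), sq_nonneg μ,
        sq_nonneg (D σ - μ), sq_nonneg (M - μ), sq_nonneg (2*M - (D σ - μ)),
        sq_nonneg (2*M + (D σ - μ)), sq_nonneg (M + μ)]
  -- assemble
  show |(∑ σ : Fin k ↪ Fin n, D σ ^ 4) / (N : ℝ) - μ ^ 4| ≤ 72 * M ^ 4 / (m : ℝ)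
  have hsplit : (∑ σ : Fin k ↪ Fin n, D σ ^ 4) / (N : ℝ) - μ ^ 4
      = (∑ σ : Fin k ↪ Fin n, (D σ ^ 4 - μ ^ 4)) / N := by
    rw [Finset.sum_sub_distrib, Finset.sum_const, Finset.card_univ]
    rw [← hN, nsmul_eq_mul]
    field_simp
  have hre : ∑ σ : Fin k ↪ Fin n, (D σ ^ 4 - μ ^ 4)
      = ∑ σ : Fin k ↪ Fin n, (D σ ^ 4 - μ ^ 4 - 4 * μ ^ 3 * (D σ - μ)) := by
    symm
    rw [Finset.sum_sub_distrib, ← Finset.mul_sum, hEX, mul_zero, sub_zero]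
  have hnum : |∑ σ : Fin k ↪ Fin n, (D σ ^ 4 - μ ^ 4)| ≤ 18 * M ^ 2 * (4 * M ^ 2 * N / m) := by
    rw [hre]
    calc |∑ σ : Fin k ↪ Fin n, (D σ ^ 4 - μ ^ 4 - 4 * μ ^ 3 * (D σ - μ))|
        ≤ ∑ σ : Fin k ↪ Fin n, |D σ ^ 4 - μ ^ 4 - 4 * μ ^ 3 * (D σ - μ)| :=
          Finset.abs_sum_le_sum_abs _ _
      _ ≤ ∑ σ : Fin k ↪ Fin n, 18 * M ^ 2 * (D σ - μ) ^ 2 :=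
          Finset.sum_le_sum fun σ _ => hptb σ
      _ = 18 * M ^ 2 * ∑ σ : Fin k ↪ Fin n, (D σ - μ) ^ 2 := by rw [Finset.mul_sum]
      _ ≤ 18 * M ^ 2 * (4 * M ^ 2 * N / m) := by
          refine mul_le_mul_of_nonneg_left hX2 (by positivity)
  rw [hsplit, abs_div, abs_of_pos hNR]
  rw [div_le_div_iff₀ hNR hmR]
  calc |∑ σ : Fin k ↪ Fin n, (D σ ^ 4 - μ ^ 4)| * m
      ≤ (18 * M ^ 2 * (4 * M ^ 2 * N / m)) * m := by
        exact mul_le_mul_of_nonneg_right hnum hmR.le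
    _ = 72 * M ^ 4 * N := by field_simp; ring

theorem stmt10 (M : ℝ) : ∃ C : ℝ, ∀ (n k j : ℕ) (hn : 0 < n) (hk : k ≤ n)
    (hj : 1 ≤ j) (hjk : j ≤ k), ∀ g : ℝ → ℝ, (∀ x, |g x| ≤ M) →
    |(∑ σ : Fin k ↪ Fin n,
        (condExpSWOR n k (j - 1)
          (fun τ => g ((((τ ⟨j - 1, by omega⟩ : Fin n) : ℕ) + 1 : ℝ) / n)) σ) ^ 4) /
        (Fintype.card (Fin k ↪ Fin n) : ℝ)
      - ((∑ t : Fin n, g (((t : ℕ) + 1 : ℝ) / n)) / n) ^ 4|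
      ≤ C / ((n : ℝ) - j + 1) := by
  classical
  refine ⟨72 * M ^ 4, ?_⟩
  intro n k j hn hk hj hjk g hg
  have hj'k : j - 1 < k := by omega
  have heval : ∀ σ : Fin k ↪ Fin n,
      condExpSWOR n k (j - 1)
        (fun τ => g ((((τ ⟨j - 1, by omega⟩ : Fin n) : ℕ) + 1 : ℝ) / n)) σ
      = (∑ t ∈ univ \ ((univ.filter fun i : Fin k => (i : ℕ) < j - 1).image σ),
          g (((t : ℕ) + 1 : ℝ) / n)) / ((n - (j - 1) : ℕ) : ℝ) :=
    fun σ => condExp_eval (j - 1) hj'k (fun t : Fin n => g (((t : ℕ) + 1 : ℝ) / n)) σ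
  simp only [heval]
  have hden : (((n - (j - 1) : ℕ)) : ℝ) = (n : ℝ) - j + 1 := by
    have h1 : j - 1 ≤ n := by omega
    rw [Nat.cast_sub h1, Nat.cast_sub hj, Nat.cast_one]
    ring
  rw [← hden]
  exact key hj'k hk M (fun t : Fin n => g (((t : ℕ) + 1 : ℝ) / n)) (fun t => hg _)
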